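/- Let p_f : ℝ → EuclideanSpace ℝ (Fin 3) be twice differentiable in a neighborhood of s₀ with ‖p_f'(s)‖ = 1 for all s, suppose k(s) := ‖p_f''(s)‖ ≠ 0 for all s in a neighborhood of s₀, and suppose n(s) := p_f''(s)/k(s) is differentiable at s₀. Let R_SF(s) denote the 3×3 matrix with columns t(s), n(s), b(s). Then R_SF is differentiable at s₀ and R_SF'(s₀) = R_SF(s₀) · M, where M is the matrix with rows (0, −k(s₀), 0), (k(s₀), 0, −τ(s₀)), (0, τ(s₀), 0) and τ(s₀) := ⟪b(s₀), n'(s₀)⟫ (the Serret–Frenet matrix differential equation). -/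

import Mathlib

open scoped RealInnerProductSpace Matrix

/-- Cross product on `EuclideanSpace ℝ (Fin 3)`. -/
noncomputable def cross3 (u v : EuclideanSpace ℝ (Fin 3)) : EuclideanSpace ℝ (Fin 3) :=
  (WithLp.equiv 2 (Fin 3 → ℝ)).symm
    ![u 1 * v 2 - u 2 * v 1, u 2 * v 0 - u 0 * v 2, u 0 * v 1 - u 1 * v 0]

/-- Tangent vector of an arc-length parameterized curve. -/
noncomputable def tang (p_f : ℝ → EuclideanSpace ℝ (Fin 3)) (s : ℝ) : EuclideanSpace ℝ (Fin 3) :=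
  deriv p_f s

/-- Curvature. -/
noncomputable def curv (p_f : ℝ → EuclideanSpace ℝ (Fin 3)) (s : ℝ) : ℝ :=
  ‖deriv (deriv p_f) s‖

/-- Normal vector. -/
noncomputable def nor (p_f : ℝ → EuclideanSpace ℝ (Fin 3)) (s : ℝ) : EuclideanSpace ℝ (Fin 3) :=
  (curv p_f s)⁻¹ • deriv (deriv p_f) s

/-- Binormal vector. -/
noncomputable def binor (p_f : ℝ → EuclideanSpace ℝ (Fin 3)) (s : ℝ) : EuclideanSpace ℝ (Fin 3) :=
  cross3 (tang p_f s) (nor p_f s)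

/-- Torsion: `τ(s) = ⟪b(s), n'(s)⟫`. -/
noncomputable def tors (p_f : ℝ → EuclideanSpace ℝ (Fin 3)) (s : ℝ) : ℝ :=
  ⟪binor p_f s, deriv (nor p_f) s⟫

/-- The Serret–Frenet matrix, whose columns are the tangent, normal and binormal vectors. -/
noncomputable def RSF (p_f : ℝ → EuclideanSpace ℝ (Fin 3)) (s : ℝ) : Matrix (Fin 3) (Fin 3) ℝ :=
  Matrix.of fun i j => ![tang p_f s, nor p_f s, binor p_f s] j i

attribute [local instance] Matrix.normedAddCommGroup Matrix.normedSpace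

section aux

lemma cross3_apply0 (u v : EuclideanSpace ℝ (Fin 3)) :
    cross3 u v 0 = u 1 * v 2 - u 2 * v 1 := rfl
lemma cross3_apply1 (u v : EuclideanSpace ℝ (Fin 3)) :
    cross3 u v 1 = u 2 * v 0 - u 0 * v 2 := rfl
lemma cross3_apply2 (u v : EuclideanSpace ℝ (Fin 3)) :
    cross3 u v 2 = u 0 * v 1 - u 1 * v 0 := rfl

lemma expand3 (t n v : EuclideanSpace ℝ (Fin 3)) (ht : ⟪t,t⟫ = 1)
    (hnn : ⟪n,n⟫ = 1) (htn : ⟪t,n⟫ = 0) :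
    ⟪t,v⟫ • t + ⟪n,v⟫ • n + ⟪cross3 t n, v⟫ • cross3 t n = v := by
  simp only [PiLp.inner_apply, RCLike.inner_apply, conj_trivial, Fin.sum_univ_three] at ht hnn htn
  have h1 : (!![t 0, t 1, t 2; n 0, n 1, n 2;
        t 1 * n 2 - t 2 * n 1, t 2 * n 0 - t 0 * n 2, t 0 * n 1 - t 1 * n 0] *
      !![t 0, n 0, t 1 * n 2 - t 2 * n 1; t 1, n 1, t 2 * n 0 - t 0 * n 2;
        t 2, n 2, t 0 * n 1 - t 1 * n 0] : Matrix (Fin 3) (Fin 3) ℝ) = 1 := by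
    ext i j
    fin_cases i <;> fin_cases j <;>
      simp [Matrix.mul_apply, Fin.sum_univ_three, Matrix.one_apply]
    · linear_combination ht
    · linear_combination htn
    · ring
    · linear_combination htn
    · linear_combination hnn
    · ring
    · ring
    · ring
    · linear_combination (n 0*n 0+n 1*n 1+n 2*n 2) * ht + hnn - (t 0*n 0+t 1*n 1+t 2*n 2) * htn
  have h2 := mul_eq_one_comm.mp h1
  have e : ∀ i j : Fin 3,
      (!![t 0, n 0, t 1 * n 2 - t 2 * n 1; t 1, n 1, t 2 * n 0 - t 0 * n 2;
        t 2, n 2, t 0 * n 1 - t 1 * n 0] *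
       !![t 0, t 1, t 2; n 0, n 1, n 2;
        t 1 * n 2 - t 2 * n 1, t 2 * n 0 - t 0 * n 2, t 0 * n 1 - t 1 * n 0] : Matrix (Fin 3) (Fin 3) ℝ) i j
      = (1 : Matrix (Fin 3) (Fin 3) ℝ) i j := fun i j => congrFun (congrFun h2 i) j
  have key : ∀ i : Fin 3,
      (⟪t,v⟫ • t + ⟪n,v⟫ • n + ⟪cross3 t n, v⟫ • cross3 t n) i = v i := by
    intro i
    fin_cases i
    · show (⟪t,v⟫ • t + ⟪n,v⟫ • n + ⟪cross3 t n, v⟫ • cross3 t n) 0 = v 0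
      have e0 := e 0 0; have e1 := e 0 1; have e2 := e 0 2
      simp [Matrix.mul_apply, Fin.sum_univ_three, Matrix.one_apply] at e0 e1 e2
      simp only [PiLp.add_apply, PiLp.smul_apply, smul_eq_mul, PiLp.inner_apply,
        RCLike.inner_apply, conj_trivial, Fin.sum_univ_three,
        cross3_apply0, cross3_apply1, cross3_apply2]
      linear_combination v 0 * e0 + v 1 * e1 + v 2 * e2
    · show (⟪t,v⟫ • t + ⟪n,v⟫ • n + ⟪cross3 t n, v⟫ • cross3 t n) 1 = v 1
      have e0 := e 1 0; have e1 := e 1 1; have e2 := e 1 2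
      simp [Matrix.mul_apply, Fin.sum_univ_three, Matrix.one_apply] at e0 e1 e2
      simp only [PiLp.add_apply, PiLp.smul_apply, smul_eq_mul, PiLp.inner_apply,
        RCLike.inner_apply, conj_trivial, Fin.sum_univ_three,
        cross3_apply0, cross3_apply1, cross3_apply2]
      linear_combination v 0 * e0 + v 1 * e1 + v 2 * e2
    · show (⟪t,v⟫ • t + ⟪n,v⟫ • n + ⟪cross3 t n, v⟫ • cross3 t n) 2 = v 2
      have e0 := e 2 0; have e1 := e 2 1; have e2 := e 2 2
      simp [Matrix.mul_apply, Fin.sum_univ_three, Matrix.one_apply] at e0 e1 e2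
      simp only [PiLp.add_apply, PiLp.smul_apply, smul_eq_mul, PiLp.inner_apply,
        RCLike.inner_apply, conj_trivial, Fin.sum_univ_three,
        cross3_apply0, cross3_apply1, cross3_apply2]
      linear_combination v 0 * e0 + v 1 * e1 + v 2 * e2
  exact PiLp.ext key

lemma coordD {f : ℝ → EuclideanSpace ℝ (Fin 3)} {f' : EuclideanSpace ℝ (Fin 3)} {s : ℝ}
    (h : HasDerivAt f f' s) (i : Fin 3) : HasDerivAt (fun u => f u i) (f' i) s := by
  have := (EuclideanSpace.proj i (𝕜 := ℝ)).hasFDerivAt.comp_hasDerivAt s h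
  exact this

end aux

theorem serret_frenet_matrix_ode
    (p_f : ℝ → EuclideanSpace ℝ (Fin 3)) (s₀ : ℝ)
    (hd1 : ∀ᶠ s in nhds s₀, DifferentiableAt ℝ p_f s)
    (hd2 : ∀ᶠ s in nhds s₀, DifferentiableAt ℝ (deriv p_f) s)
    (hunit : ∀ s : ℝ, ‖deriv p_f s‖ = 1)
    (hk : ∀ᶠ s in nhds s₀, curv p_f s ≠ 0)
    (hn : DifferentiableAt ℝ (nor p_f) s₀) :
    DifferentiableAt ℝ (RSF p_f) s₀ ∧
      deriv (RSF p_f) s₀ =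
        RSF p_f s₀ *
          !![0, -(curv p_f s₀), 0;
             curv p_f s₀, 0, -(tors p_f s₀);
             0, tors p_f s₀, 0] := by
  have hk₀ : curv p_f s₀ ≠ 0 := hk.self_of_nhds
  have hkpos : ∀ s, curv p_f s ≠ 0 → 0 < curv p_f s := fun s hs =>
    lt_of_le_of_ne (norm_nonneg _) (Ne.symm hs)
  -- t' = k • n
  have hpp : deriv (deriv p_f) s₀ = curv p_f s₀ • nor p_f s₀ := by
    rw [nor, smul_smul, mul_inv_cancel₀ hk₀, one_smul]
  have hT : HasDerivAt (tang p_f) (curv p_f s₀ • nor p_f s₀) s₀ := by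
    rw [← hpp]; exact (hd2.self_of_nhds).hasDerivAt
  -- ⟪t, p''⟫ = 0 wherever deriv p_f is differentiable
  have key : ∀ s, DifferentiableAt ℝ (deriv p_f) s →
      ⟪deriv p_f s, deriv (deriv p_f) s⟫ = 0 := by
    intro s hs
    have h1 : HasDerivAt (fun u => ⟪deriv p_f u, deriv p_f u⟫)
        (⟪deriv p_f s, deriv (deriv p_f) s⟫ + ⟪deriv (deriv p_f) s, deriv p_f s⟫) s :=
      hs.hasDerivAt.inner ℝ hs.hasDerivAt
    have hconst : (fun u => ⟪deriv p_f u, deriv p_f u⟫) = fun _ => (1:ℝ) := by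
      funext u
      rw [real_inner_self_eq_norm_sq, hunit, one_pow]
    have h2 : HasDerivAt (fun u => ⟪deriv p_f u, deriv p_f u⟫) 0 s := by
      rw [hconst]; exact hasDerivAt_const s 1
    have := h1.unique h2
    rw [real_inner_comm (deriv (deriv p_f) s)] at this
    rw [real_inner_comm]; linarith
  -- eventual facts
  have hNN : ∀ᶠ s in nhds s₀, ⟪nor p_f s, nor p_f s⟫ = (1:ℝ) := by
    filter_upwards [hk] with s hs
    rw [real_inner_self_eq_norm_sq, nor, norm_smul, norm_inv, Real.norm_eq_abs,
      abs_of_pos (hkpos s hs)]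
    rw [show ‖deriv (deriv p_f) s‖ = curv p_f s from rfl, inv_mul_cancel₀ hs, one_pow]
  have hTN : ∀ᶠ s in nhds s₀, ⟪tang p_f s, nor p_f s⟫ = (0:ℝ) := by
    filter_upwards [hd2] with s hs
    rw [nor, real_inner_smul_right]
    rw [show tang p_f s = deriv p_f s from rfl, key s hs, mul_zero]
  have hnn1 : ⟪nor p_f s₀, nor p_f s₀⟫ = (1:ℝ) := hNN.self_of_nhds
  have htt1 : ⟪tang p_f s₀, tang p_f s₀⟫ = (1:ℝ) := by
    rw [real_inner_self_eq_norm_sq, show tang p_f s₀ = deriv p_f s₀ from rfl, hunit, one_pow]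
  have htn1 : ⟪tang p_f s₀, nor p_f s₀⟫ = (0:ℝ) := hTN.self_of_nhds
  -- ⟪n, n'⟫ = 0
  have hnn' : ⟪nor p_f s₀, deriv (nor p_f) s₀⟫ = 0 := by
    have h1 : HasDerivAt (fun s => ⟪nor p_f s, nor p_f s⟫)
        (⟪nor p_f s₀, deriv (nor p_f) s₀⟫ + ⟪deriv (nor p_f) s₀, nor p_f s₀⟫) s₀ :=
      hn.hasDerivAt.inner ℝ hn.hasDerivAt
    have h2 : HasDerivAt (fun s => ⟪nor p_f s, nor p_f s⟫) 0 s₀ :=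
      (hasDerivAt_const s₀ (1:ℝ)).congr_of_eventuallyEq hNN
    have := h1.unique h2
    rw [real_inner_comm (deriv (nor p_f) s₀)] at this
    rw [real_inner_comm]; linarith
  -- ⟪t, n'⟫ = -k
  have htn' : ⟪tang p_f s₀, deriv (nor p_f) s₀⟫ = -(curv p_f s₀) := by
    have h1 : HasDerivAt (fun s => ⟪tang p_f s, nor p_f s⟫)
        (⟪tang p_f s₀, deriv (nor p_f) s₀⟫ + ⟪curv p_f s₀ • nor p_f s₀, nor p_f s₀⟫) s₀ :=
      hT.inner ℝ hn.hasDerivAt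
    have h2 : HasDerivAt (fun s => ⟪tang p_f s, nor p_f s⟫) 0 s₀ :=
      (hasDerivAt_const s₀ (0:ℝ)).congr_of_eventuallyEq hTN
    have h3 := h1.unique h2
    rw [real_inner_smul_left, hnn1, mul_one] at h3
    linarith
  -- n' = -k t + τ b
  have hNder : deriv (nor p_f) s₀ =
      (-(curv p_f s₀)) • tang p_f s₀ + tors p_f s₀ • binor p_f s₀ := by
    have h := expand3 (tang p_f s₀) (nor p_f s₀) (deriv (nor p_f) s₀) htt1 hnn1 htn1
    rw [htn', hnn', show cross3 (tang p_f s₀) (nor p_f s₀) = binor p_f s₀ from rfl] at h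
    rw [show ⟪binor p_f s₀, deriv (nor p_f) s₀⟫ = tors p_f s₀ from rfl] at h
    rw [← h, zero_smul, add_zero]
  have hN : HasDerivAt (nor p_f)
      ((-(curv p_f s₀)) • tang p_f s₀ + tors p_f s₀ • binor p_f s₀) s₀ := by
    rw [← hNder]; exact hn.hasDerivAt
  -- coordinate versions of orthonormality at s₀
  have htt_c : tang p_f s₀ 0 * tang p_f s₀ 0 + tang p_f s₀ 1 * tang p_f s₀ 1 +
      tang p_f s₀ 2 * tang p_f s₀ 2 = 1 := by
    have h := htt1
    simp only [PiLp.inner_apply, RCLike.inner_apply, conj_trivial, Fin.sum_univ_three] at h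
    linear_combination h
  have htn_c : tang p_f s₀ 0 * nor p_f s₀ 0 + tang p_f s₀ 1 * nor p_f s₀ 1 +
      tang p_f s₀ 2 * nor p_f s₀ 2 = 0 := by
    have h := htn1
    simp only [PiLp.inner_apply, RCLike.inner_apply, conj_trivial, Fin.sum_univ_three] at h
    linear_combination h
  -- binor coordinate functions
  have hb0 : (fun s => binor p_f s 0) =
      fun s => tang p_f s 1 * nor p_f s 2 - tang p_f s 2 * nor p_f s 1 := rfl
  have hb1 : (fun s => binor p_f s 1) =
      fun s => tang p_f s 2 * nor p_f s 0 - tang p_f s 0 * nor p_f s 2 := rfl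
  have hb2 : (fun s => binor p_f s 2) =
      fun s => tang p_f s 0 * nor p_f s 1 - tang p_f s 1 * nor p_f s 0 := rfl
  -- coordinate derivative facts
  have hTc := fun i => coordD hT i
  have hNc := fun i => coordD hN i
  have hB0 : HasDerivAt (fun s => binor p_f s 0)
      ((curv p_f s₀ • nor p_f s₀) 1 * nor p_f s₀ 2 +
        tang p_f s₀ 1 * ((-(curv p_f s₀)) • tang p_f s₀ + tors p_f s₀ • binor p_f s₀) 2 -
       ((curv p_f s₀ • nor p_f s₀) 2 * nor p_f s₀ 1 +
        tang p_f s₀ 2 * ((-(curv p_f s₀)) • tang p_f s₀ + tors p_f s₀ • binor p_f s₀) 1)) s₀ := by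
    rw [hb0]; exact ((hTc 1).mul (hNc 2)).sub ((hTc 2).mul (hNc 1))
  have hB1 : HasDerivAt (fun s => binor p_f s 1)
      ((curv p_f s₀ • nor p_f s₀) 2 * nor p_f s₀ 0 +
        tang p_f s₀ 2 * ((-(curv p_f s₀)) • tang p_f s₀ + tors p_f s₀ • binor p_f s₀) 0 -
       ((curv p_f s₀ • nor p_f s₀) 0 * nor p_f s₀ 2 +
        tang p_f s₀ 0 * ((-(curv p_f s₀)) • tang p_f s₀ + tors p_f s₀ • binor p_f s₀) 2)) s₀ := by
    rw [hb1]; exact ((hTc 2).mul (hNc 0)).sub ((hTc 0).mul (hNc 2))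
  have hB2 : HasDerivAt (fun s => binor p_f s 2)
      ((curv p_f s₀ • nor p_f s₀) 0 * nor p_f s₀ 1 +
        tang p_f s₀ 0 * ((-(curv p_f s₀)) • tang p_f s₀ + tors p_f s₀ • binor p_f s₀) 1 -
       ((curv p_f s₀ • nor p_f s₀) 1 * nor p_f s₀ 0 +
        tang p_f s₀ 1 * ((-(curv p_f s₀)) • tang p_f s₀ + tors p_f s₀ • binor p_f s₀) 0)) s₀ := by
    rw [hb2]; exact ((hTc 0).mul (hNc 1)).sub ((hTc 1).mul (hNc 0))
  -- assemble
  suffices H : HasDerivAt (RSF p_f)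
      (RSF p_f s₀ *
        !![0, -(curv p_f s₀), 0;
           curv p_f s₀, 0, -(tors p_f s₀);
           0, tors p_f s₀, 0]) s₀ from ⟨H.differentiableAt, H.deriv⟩
  apply hasDerivAt_pi.mpr
  intro i
  apply hasDerivAt_pi.mpr
  intro j
  fin_cases j
  · show HasDerivAt (fun s => tang p_f s i)
      ((RSF p_f s₀ *
        !![0, -(curv p_f s₀), 0;
           curv p_f s₀, 0, -(tors p_f s₀);
           0, tors p_f s₀, 0]) i 0) s₀
    convert hTc i using 1
    simp [RSF, Matrix.mul_apply, Fin.sum_univ_three, PiLp.smul_apply, smul_eq_mul]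
    ring
  · show HasDerivAt (fun s => nor p_f s i)
      ((RSF p_f s₀ *
        !![0, -(curv p_f s₀), 0;
           curv p_f s₀, 0, -(tors p_f s₀);
           0, tors p_f s₀, 0]) i 1) s₀
    convert hNc i using 1
    simp [RSF, Matrix.mul_apply, Fin.sum_univ_three, PiLp.smul_apply, PiLp.add_apply,
      smul_eq_mul]
    ring
  · show HasDerivAt (fun s => binor p_f s i)
      ((RSF p_f s₀ *
        !![0, -(curv p_f s₀), 0;
           curv p_f s₀, 0, -(tors p_f s₀);
           0, tors p_f s₀, 0]) i 2) s₀
    fin_cases i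
    · show HasDerivAt (fun s => binor p_f s 0)
        ((RSF p_f s₀ *
          !![0, -(curv p_f s₀), 0;
             curv p_f s₀, 0, -(tors p_f s₀);
             0, tors p_f s₀, 0]) 0 2) s₀
      convert hB0 using 1
      simp only [RSF, Matrix.mul_apply, Fin.sum_univ_three, PiLp.smul_apply, PiLp.add_apply,
        smul_eq_mul, Matrix.of_apply, Matrix.cons_val_zero, Matrix.cons_val_one,
        Matrix.head_cons, Matrix.cons_val_two, Matrix.tail_cons, binor,
        cross3_apply0, cross3_apply1, cross3_apply2]
      linear_combination (-(tors p_f s₀) * tang p_f s₀ 0) * htn_c +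
        (tors p_f s₀ * nor p_f s₀ 0) * htt_c
    · show HasDerivAt (fun s => binor p_f s 1)
        ((RSF p_f s₀ *
          !![0, -(curv p_f s₀), 0;
             curv p_f s₀, 0, -(tors p_f s₀);
             0, tors p_f s₀, 0]) 1 2) s₀
      convert hB1 using 1
      simp only [RSF, Matrix.mul_apply, Fin.sum_univ_three, PiLp.smul_apply, PiLp.add_apply,
        smul_eq_mul, Matrix.of_apply, Matrix.cons_val_zero, Matrix.cons_val_one,
        Matrix.head_cons, Matrix.cons_val_two, Matrix.tail_cons, binor,
        cross3_apply0, cross3_apply1, cross3_apply2]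
      linear_combination (-(tors p_f s₀) * tang p_f s₀ 1) * htn_c +
        (tors p_f s₀ * nor p_f s₀ 1) * htt_c
    · show HasDerivAt (fun s => binor p_f s 2)
        ((RSF p_f s₀ *
          !![0, -(curv p_f s₀), 0;
             curv p_f s₀, 0, -(tors p_f s₀);
             0, tors p_f s₀, 0]) 2 2) s₀
      convert hB2 using 1
      simp only [RSF, Matrix.mul_apply, Fin.sum_univ_three, PiLp.smul_apply, PiLp.add_apply,
        smul_eq_mul, Matrix.of_apply, Matrix.cons_val_zero, Matrix.cons_val_one,
        Matrix.head_cons, Matrix.cons_val_two, Matrix.tail_cons, binor,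
        cross3_apply0, cross3_apply1, cross3_apply2]
      linear_combination (-(tors p_f s₀) * tang p_f s₀ 2) * htn_c +
        (tors p_f s₀ * nor p_f s₀ 2) * htt_c
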